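/- arXiv:1203.6306 — 2 statements merged into one kernel-verified Lean document; each statement's English description precedes it below -/
import Mathlib

section
/- Let $(\Omega, \mu)$ be a measure space and let $0 < \sigma_\circ \le \sigma^\circ$ be real numbers. Let $w_n, w : \Omega \to \mathbb{R}$ be measurable with $\sigma_\circ \le w_n(x) \le \sigma^\circ$ and $\sigma_\circ \le w(x) \le \sigma^\circ$ for $\mu$-a.e. $x$, and let $F_n, F : \Omega \to \mathbb{R}^3$ be measurable with finite $L^2(\mu;\mathbb{R}^3)$ norm. Assume: (i) $\|w_n F - w F\|_{L^2(\mu;\mathbb{R}^3)} \to 0$; (ii) $F_n \rightharpoonup F$ weakly in $L^2$, i.e. $\int_\Omega F_n \cdot G \, d\mu \to \int_\Omega F \cdot G \, d\mu$ for every measurable $G : \Omega \to \mathbb{R}^3$ with finite $L^2$ norm; (iii) $\limsup_n \int_\Omega w_n |F_n|^2 \, d\mu \le \int_\Omega w |F|^2 \, d\mu$. Then $\|F_n - F\|_{L^2(\mu;\mathbb{R}^3)} \to 0$. -/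
open MeasureTheory Filter Topology RealInnerProductSpace

local notation "E3" => EuclideanSpace ℝ (Fin 3)

private lemma aux_int_inner {Ω : Type*} [MeasurableSpace Ω] {μ : Measure Ω}
    {f g : Ω → E3} (hf : MemLp f 2 μ) (hg : MemLp g 2 μ) :
    Integrable (fun x => ⟪f x, g x⟫) μ := by
  refine (L2.integrable_inner (𝕜 := ℝ) (hf.toLp f) (hg.toLp g)).congr ?_
  filter_upwards [hf.coeFn_toLp, hg.coeFn_toLp] with x h1 h2
  rw [h1, h2]

private lemma aux_inner_eq {Ω : Type*} [MeasurableSpace Ω] {μ : Measure Ω}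
    {f g : Ω → E3} (hf : MemLp f 2 μ) (hg : MemLp g 2 μ) :
    ⟪hf.toLp f, hg.toLp g⟫ = ∫ x, ⟪f x, g x⟫ ∂μ := by
  rw [L2.inner_def]
  apply integral_congr_ae
  filter_upwards [hf.coeFn_toLp, hg.coeFn_toLp] with x h1 h2
  rw [h1, h2]

private lemma aux_tendsto_inner_zero {Ω : Type*} [MeasurableSpace Ω] {μ : Measure Ω}
    {Φ H : ℕ → Ω → E3} (hΦ : ∀ n, MemLp (Φ n) 2 μ) (hH : ∀ n, MemLp (H n) 2 μ)
    {C : ℝ} (hC : ∀ n, ‖(hΦ n).toLp (Φ n)‖ ≤ C)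
    (h0 : Tendsto (fun n => eLpNorm (H n) 2 μ) atTop (𝓝 0)) :
    Tendsto (fun n => ∫ x, ⟪Φ n x, H n x⟫ ∂μ) atTop (𝓝 0) := by
  have ht : Tendsto (fun n => (eLpNorm (H n) 2 μ).toReal) atTop (𝓝 0) := by
    have := (ENNReal.tendsto_toReal (by simp)).comp h0
    exact this
  refine squeeze_zero_norm (fun n => ?_)
    (show Tendsto (fun n => C * (eLpNorm (H n) 2 μ).toReal) atTop (𝓝 0) by
      simpa using ht.const_mul C)
  rw [← aux_inner_eq (hΦ n) (hH n)]
  calc ‖⟪(hΦ n).toLp (Φ n), (hH n).toLp (H n)⟫‖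
      ≤ ‖(hΦ n).toLp (Φ n)‖ * ‖(hH n).toLp (H n)‖ := norm_inner_le_norm _ _
    _ ≤ C * ‖(hH n).toLp (H n)‖ := mul_le_mul_of_nonneg_right (hC n) (norm_nonneg _)
    _ = C * (eLpNorm (H n) 2 μ).toReal := by rw [Lp.norm_toLp]

/-- if the weights `wₙ, w` are bounded between `σ₀ > 0` and `σmax` a.e.,
`wₙ F → w F` strongly in `L²`, `Fₙ ⇀ F` weakly in `L²`, and
`limsup ∫ wₙ |Fₙ|² ≤ ∫ w |F|²`, then `Fₙ → F` strongly in `L²(μ; ℝ³)`. -/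
theorem weighted_energy_implies_strong_L2 {Ω : Type*} [MeasurableSpace Ω] (μ : Measure Ω)
    (σ₀ σmax : ℝ) (hσ₀ : 0 < σ₀) (hσ : σ₀ ≤ σmax)
    (wn : ℕ → Ω → ℝ) (w : Ω → ℝ)
    (hwn : ∀ n, Measurable (wn n)) (hw : Measurable w)
    (hwnbd : ∀ n, ∀ᵐ x ∂μ, σ₀ ≤ wn n x ∧ wn n x ≤ σmax)
    (hwbd : ∀ᵐ x ∂μ, σ₀ ≤ w x ∧ w x ≤ σmax)
    (Fn : ℕ → Ω → EuclideanSpace ℝ (Fin 3)) (F : Ω → EuclideanSpace ℝ (Fin 3))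
    (hFn : ∀ n, Measurable (Fn n)) (hF : Measurable F)
    (hFnL2 : ∀ n, MemLp (Fn n) 2 μ) (hFL2 : MemLp F 2 μ)
    (hi : Tendsto
      (fun n => eLpNorm (fun x => wn n x • F x - w x • F x) 2 μ) atTop (𝓝 0))
    (hii : ∀ G : Ω → EuclideanSpace ℝ (Fin 3), Measurable G → MemLp G 2 μ →
      Tendsto (fun n => ∫ x, ⟪Fn n x, G x⟫ ∂μ) atTop (𝓝 (∫ x, ⟪F x, G x⟫ ∂μ)))
    (hiii : Filter.limsup (fun n => ∫ x, wn n x * ‖Fn n x‖ ^ 2 ∂μ) atTop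
      ≤ ∫ x, w x * ‖F x‖ ^ 2 ∂μ) :
    Tendsto (fun n => eLpNorm (Fn n - F) 2 μ) atTop (𝓝 0) := by
  classical
  set L : ℝ := ∫ x, w x * ‖F x‖ ^ 2 ∂μ with hLdef
  -- Memℒp facts
  have hwtop : MemLp w ⊤ μ := by
    refine memLp_top_of_bound hw.aestronglyMeasurable σmax ?_
    filter_upwards [hwbd] with x hx
    rw [Real.norm_eq_abs, abs_le]; exact ⟨by linarith, hx.2⟩
  have hwntop : ∀ n, MemLp (wn n) ⊤ μ := by
    intro n
    refine memLp_top_of_bound (hwn n).aestronglyMeasurable σmax ?_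
    filter_upwards [hwnbd n] with x hx
    rw [Real.norm_eq_abs, abs_le]; exact ⟨by linarith, hx.2⟩
  have hwF : MemLp (fun x => w x • F x) 2 μ := hFL2.smul hwtop
  have hwnF : ∀ n, MemLp (fun x => wn n x • F x) 2 μ := fun n =>
    hFL2.smul (hwntop n)
  have hHn : ∀ n, MemLp (fun x => wn n x • F x - w x • F x) 2 μ := fun n =>
    (hwnF n).sub hwF
  -- Banach–Steinhaus: the L² norms of the Fn are uniformly bounded
  obtain ⟨C, hC⟩ : ∃ C, ∀ n, ‖(hFnL2 n).toLp (Fn n)‖ ≤ C := by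
    have hpt : ∀ y : Lp E3 2 μ, ∃ M, ∀ n : ℕ,
        ‖innerSL ℝ ((hFnL2 n).toLp (Fn n)) y‖ ≤ M := by
      intro y
      set G : Ω → E3 := (Lp.aestronglyMeasurable y).mk y with hGdef
      have hGmeas : Measurable G :=
        (Lp.aestronglyMeasurable y).stronglyMeasurable_mk.measurable
      have hGae : (y : Ω → E3) =ᵐ[μ] G := (Lp.aestronglyMeasurable y).ae_eq_mk
      have hGL2 : MemLp G 2 μ := (Lp.memLp y).ae_eq hGae
      have hconv := (hii G hGmeas hGL2).norm
      obtain ⟨M, hM⟩ := hconv.bddAbove_range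
      refine ⟨M, fun n => ?_⟩
      have heq : ‖innerSL ℝ ((hFnL2 n).toLp (Fn n)) y‖ = ‖∫ x, ⟪Fn n x, G x⟫ ∂μ‖ := by
        congr 1
        rw [innerSL_apply_apply, L2.inner_def]
        apply integral_congr_ae
        filter_upwards [(hFnL2 n).coeFn_toLp, hGae] with x h1 h2
        rw [h1, h2]
      rw [heq]
      exact hM ⟨n, rfl⟩
    obtain ⟨C, hC⟩ := banach_steinhaus
      (g := fun n => innerSL ℝ ((hFnL2 n).toLp (Fn n))) hpt
    exact ⟨C, fun n => by simpa [innerSL_apply_norm] using hC n⟩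
  have hC0 : 0 ≤ C := le_trans (norm_nonneg _) (hC 0)
  -- the two "error" integrals tend to zero
  have ht0 : Tendsto (fun n => ∫ x, ⟪Fn n x, wn n x • F x - w x • F x⟫ ∂μ)
      atTop (𝓝 0) := aux_tendsto_inner_zero hFnL2 hHn hC hi
  have ht0' : Tendsto (fun n => ∫ x, ⟪F x, wn n x • F x - w x • F x⟫ ∂μ)
      atTop (𝓝 0) :=
    aux_tendsto_inner_zero (fun _ => hFL2) hHn (C := ‖hFL2.toLp F‖) (fun _ => le_rfl) hi
  have hLinner : ∫ x, ⟪F x, w x • F x⟫ ∂μ = L := by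
    refine integral_congr_ae (Eventually.of_forall fun x => ?_)
    simp only [real_inner_smul_right, real_inner_self_eq_norm_sq]
  -- bn → L
  have hB : Tendsto (fun n => ∫ x, ⟪Fn n x, wn n x • F x⟫ ∂μ) atTop (𝓝 L) := by
    have h2 := hii (fun x => w x • F x) (hw.smul hF) hwF
    rw [hLinner] at h2
    have h3 := ht0.add h2
    rw [zero_add] at h3
    refine h3.congr fun n => ?_
    rw [← integral_add (aux_int_inner (hFnL2 n) (hHn n)) (aux_int_inner (hFnL2 n) hwF)]
    refine integral_congr_ae (Eventually.of_forall fun x => ?_)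
    simp only [inner_sub_right]; ring
  -- cn → L
  have hCn : Tendsto (fun n => ∫ x, ⟪F x, wn n x • F x⟫ ∂μ) atTop (𝓝 L) := by
    have h3 := ht0'.add (tendsto_const_nhds (x := L) (f := atTop (α := ℕ)))
    rw [zero_add] at h3
    refine h3.congr fun n => ?_
    rw [← hLinner, ← integral_add (aux_int_inner hFL2 (hHn n)) (aux_int_inner hFL2 hwF)]
    refine integral_congr_ae (Eventually.of_forall fun x => ?_)
    simp only [inner_sub_right]; ring
  -- integrability facts
  have hwnbd' : ∀ n, ∀ᵐ x ∂μ, ‖wn n x‖ ≤ σmax := by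
    intro n
    filter_upwards [hwnbd n] with x hx
    rw [Real.norm_eq_abs, abs_le]; exact ⟨by linarith, hx.2⟩
  have intFnF2 : ∀ n, Integrable (fun x => ‖Fn n x - F x‖ ^ 2) μ := by
    intro n
    have := aux_int_inner ((hFnL2 n).sub hFL2) ((hFnL2 n).sub hFL2)
    simpa only [Pi.sub_apply, real_inner_self_eq_norm_sq] using this
  have intwnFnF2 : ∀ n, Integrable (fun x => wn n x * ‖Fn n x - F x‖ ^ 2) μ := fun n =>
    (intFnF2 n).bdd_mul (hwn n).aestronglyMeasurable (hwnbd' n)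
  have intFn2 : ∀ n, Integrable (fun x => ‖Fn n x‖ ^ 2) μ := by
    intro n
    have := aux_int_inner (hFnL2 n) (hFnL2 n)
    simpa only [real_inner_self_eq_norm_sq] using this
  have intwnFn2 : ∀ n, Integrable (fun x => wn n x * ‖Fn n x‖ ^ 2) μ := fun n =>
    (intFn2 n).bdd_mul (hwn n).aestronglyMeasurable (hwnbd' n)
  -- expansion + lower bound
  have hqle : ∀ n, σ₀ * (∫ x, ‖Fn n x - F x‖ ^ 2 ∂μ) ≤
      (∫ x, wn n x * ‖Fn n x‖ ^ 2 ∂μ) - 2 * (∫ x, ⟪Fn n x, wn n x • F x⟫ ∂μ)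
        + ∫ x, ⟪F x, wn n x • F x⟫ ∂μ := by
    intro n
    have h1 : σ₀ * ∫ x, ‖Fn n x - F x‖ ^ 2 ∂μ ≤
        ∫ x, wn n x * ‖Fn n x - F x‖ ^ 2 ∂μ := by
      rw [← integral_const_mul]
      refine integral_mono_ae ((intFnF2 n).const_mul σ₀) (intwnFnF2 n) ?_
      filter_upwards [hwnbd n] with x hx
      exact mul_le_mul_of_nonneg_right hx.1 (by positivity)
    have h2 : ∫ x, wn n x * ‖Fn n x - F x‖ ^ 2 ∂μ =
        (∫ x, wn n x * ‖Fn n x‖ ^ 2 ∂μ) - 2 * (∫ x, ⟪Fn n x, wn n x • F x⟫ ∂μ)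
          + ∫ x, ⟪F x, wn n x • F x⟫ ∂μ := by
      have iA : Integrable (fun x => wn n x * ‖Fn n x‖ ^ 2) μ := intwnFn2 n
      have iB : Integrable (fun x => 2 * ⟪Fn n x, wn n x • F x⟫) μ :=
        (aux_int_inner (hFnL2 n) (hwnF n)).const_mul 2
      have iC : Integrable (fun x => ⟪F x, wn n x • F x⟫) μ :=
        aux_int_inner hFL2 (hwnF n)
      have iAB : Integrable
          (fun x => wn n x * ‖Fn n x‖ ^ 2 - 2 * ⟪Fn n x, wn n x • F x⟫) μ := iA.sub iB
      have e : ∫ x, (wn n x * ‖Fn n x‖ ^ 2 - 2 * ⟪Fn n x, wn n x • F x⟫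
            + ⟪F x, wn n x • F x⟫) ∂μ
          = (∫ x, wn n x * ‖Fn n x‖ ^ 2 ∂μ) - 2 * (∫ x, ⟪Fn n x, wn n x • F x⟫ ∂μ)
            + ∫ x, ⟪F x, wn n x • F x⟫ ∂μ := by
        rw [integral_add iAB iC, integral_sub iA iB, integral_const_mul]
      rw [← e]
      refine integral_congr_ae (Eventually.of_forall fun x => ?_)
      simp only [norm_sub_sq_real, real_inner_smul_right, real_inner_self_eq_norm_sq]
      ring
    rw [h2] at h1
    exact h1
  -- boundedness of aₙ
  have haBound : ∀ n, (∫ x, wn n x * ‖Fn n x‖ ^ 2 ∂μ) ≤ σmax * C ^ 2 := by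
    intro n
    have hN : ∫ x, ‖Fn n x‖ ^ 2 ∂μ = ‖(hFnL2 n).toLp (Fn n)‖ ^ 2 := by
      have h0 := aux_inner_eq (hFnL2 n) (hFnL2 n)
      rw [real_inner_self_eq_norm_sq] at h0
      refine Eq.trans ?_ h0.symm
      refine integral_congr_ae (Eventually.of_forall fun x => ?_)
      simp only [real_inner_self_eq_norm_sq]
    have h1 : (∫ x, wn n x * ‖Fn n x‖ ^ 2 ∂μ) ≤ σmax * ∫ x, ‖Fn n x‖ ^ 2 ∂μ := by
      rw [← integral_const_mul]
      refine integral_mono_ae (intwnFn2 n) ((intFn2 n).const_mul σmax) ?_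
      filter_upwards [hwnbd n] with x hx
      exact mul_le_mul_of_nonneg_right hx.2 (by positivity)
    have h2 : ‖(hFnL2 n).toLp (Fn n)‖ ^ 2 ≤ C ^ 2 := by
      nlinarith [norm_nonneg ((hFnL2 n).toLp (Fn n)), hC n]
    calc (∫ x, wn n x * ‖Fn n x‖ ^ 2 ∂μ)
        ≤ σmax * ∫ x, ‖Fn n x‖ ^ 2 ∂μ := h1
      _ = σmax * ‖(hFnL2 n).toLp (Fn n)‖ ^ 2 := by rw [hN]
      _ ≤ σmax * C ^ 2 := mul_le_mul_of_nonneg_left h2 (by linarith)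
  -- the real integrals converge to zero
  have hInt : Tendsto (fun n => ∫ x, ‖Fn n x - F x‖ ^ 2 ∂μ) atTop (𝓝 0) := by
    refine Metric.tendsto_nhds.mpr fun ε hε => ?_
    have hδ : 0 < σ₀ * ε / 5 := by positivity
    have h1 : ∀ᶠ n in atTop,
        (∫ x, wn n x * ‖Fn n x‖ ^ 2 ∂μ) < L + σ₀ * ε / 5 := by
      refine eventually_lt_of_limsup_lt (lt_of_le_of_lt hiii (by linarith)) ?_
      exact isBoundedUnder_of ⟨σmax * C ^ 2, haBound⟩
    have h2 : ∀ᶠ n in atTop,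
        L - σ₀ * ε / 5 < ∫ x, ⟪Fn n x, wn n x • F x⟫ ∂μ :=
      hB.eventually (eventually_gt_nhds (by linarith))
    have h3 : ∀ᶠ n in atTop,
        (∫ x, ⟪F x, wn n x • F x⟫ ∂μ) < L + σ₀ * ε / 5 :=
      hCn.eventually (eventually_lt_nhds (by linarith))
    filter_upwards [h1, h2, h3] with n e1 e2 e3
    have hI0 : 0 ≤ ∫ x, ‖Fn n x - F x‖ ^ 2 ∂μ :=
      integral_nonneg fun x => by positivity
    have hq := hqle n
    rw [Real.dist_eq, sub_zero, abs_of_nonneg hI0]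
    have h4 : σ₀ * (∫ x, ‖Fn n x - F x‖ ^ 2 ∂μ) < σ₀ * ε := by linarith
    exact (mul_lt_mul_iff_right₀ hσ₀).mp h4
  -- convert to eLpNorm convergence
  have hmem : ∀ n, MemLp (Fn n - F) 2 μ := fun n => (hFnL2 n).sub hFL2
  have heq : ∀ n, eLpNorm (Fn n - F) 2 μ =
      ENNReal.ofReal ((∫ x, ‖Fn n x - F x‖ ^ 2 ∂μ) ^ (2 : ℝ)⁻¹) := by
    intro n
    rw [(hmem n).eLpNorm_eq_integral_rpow_norm (by norm_num) (by norm_num)]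
    have h2r : ((2 : ENNReal)).toReal = (2 : ℝ) := by simp
    have hint : ∫ x, ‖(Fn n - F) x‖ ^ ((2 : ENNReal)).toReal ∂μ =
        ∫ x, ‖Fn n x - F x‖ ^ 2 ∂μ := by
      refine integral_congr_ae (Eventually.of_forall fun x => ?_)
      simp only [Pi.sub_apply, h2r]
      rw [(show (2 : ℝ) = ((2 : ℕ) : ℝ) by norm_num), Real.rpow_natCast]
    rw [hint, h2r]
  have hfin : Tendsto
      (fun n => ENNReal.ofReal ((∫ x, ‖Fn n x - F x‖ ^ 2 ∂μ) ^ (2 : ℝ)⁻¹))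
      atTop (𝓝 0) := by
    have h5 : Tendsto (fun n => (∫ x, ‖Fn n x - F x‖ ^ 2 ∂μ) ^ (2 : ℝ)⁻¹)
        atTop (𝓝 0) := by
      have := hInt.rpow_const (p := (2 : ℝ)⁻¹) (Or.inr (by norm_num))
      simpa [Real.zero_rpow] using this
    have := (ENNReal.continuous_ofReal.tendsto 0).comp h5
    simpa [Function.comp_def] using this
  exact hfin.congr fun n => (heq n).symm
end

section
/- Let $X$ be a real Hilbert space and let $(X_n)_{n \in \mathbb{N}}$ be an increasing sequence of closed subspaces of $X$ whose union is dense in $X$. Let $A : X \to X^*$ be a map into the continuous dual of $X$, and let $b \in X^*$. Assume: (i) there exists $r > 0$ such that for every $n$ there is $x_n \in X_n$ with $\|x_n\| \le r$ and $\langle A x_n, y \rangle = \langle b, y \rangle$ for all $y \in X_n$; (ii) $\sup_n \|A x_n\|_{X^*} < \infty$; (iii) whenever a subsequence $(x_{n(k)})_k$ converges weakly to some $y \in X$, $A x_{n(k)} \to b$ in the weak-* sense (i.e. $\langle A x_{n(k)}, z \rangle \to \langle b, z \rangle$ for every $z \in X$), and $\langle A x_{n(k)}, x_{n(k)} \rangle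 \to \langle b, y \rangle$, then $x_{n(k)} \to y$ strongly in $X$; (iv) whenever $y_k \to y$ strongly in $X$ then $\langle A y_k, z \rangle \to \langle A y, z \rangle$ for every $z \in X$. Then there exist $x \in X$ with $\|x\| \le r$ and a subsequence $(x_{n(k)})_k$ with $x_{n(k)} \to x$ strongly in $X$ and $A x = b$. -/
open Filter Topology RealInnerProductSpace

/-- If a sequence of continuous linear functionals is uniformly bounded and converges
pointwise to `b` on a dense set, it converges pointwise to `b` everywhere. -/
private lemma dense_tendsto_aux {X : Type*} [NormedAddCommGroup X] [NormedSpace ℝ X]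
    (fn : ℕ → X →L[ℝ] ℝ) (b : X →L[ℝ] ℝ) (C : ℝ) (hC : ∀ k, ‖fn k‖ ≤ C)
    (s : Set X) (hs : Dense s)
    (h : ∀ z ∈ s, Tendsto (fun k => fn k z) atTop (𝓝 (b z))) :
    ∀ z : X, Tendsto (fun k => fn k z) atTop (𝓝 (b z)) := by
  intro z
  rw [Metric.tendsto_atTop]
  intro ε hε
  have hC0 : 0 ≤ C := le_trans (norm_nonneg _) (hC 0)
  set K : ℝ := C + ‖b‖ + 1 with hK
  have hK0 : 0 < K := by positivity
  obtain ⟨z', hz's, hz'⟩ := Metric.mem_closure_iff.mp (hs z) (ε / (2 * K)) (by positivity)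
  obtain ⟨N, hN⟩ := Metric.tendsto_atTop.mp (h z' hz's) (ε / 2) (by positivity)
  refine ⟨N, fun k hk => ?_⟩
  have h1 : |fn k z - fn k z'| ≤ C * ‖z - z'‖ := by
    calc |fn k z - fn k z'| = ‖fn k (z - z')‖ := by rw [map_sub]; rfl
      _ ≤ ‖fn k‖ * ‖z - z'‖ := (fn k).le_opNorm _
      _ ≤ C * ‖z - z'‖ := mul_le_mul_of_nonneg_right (hC k) (norm_nonneg _)
  have h2 : |b z' - b z| ≤ ‖b‖ * ‖z - z'‖ := by
    calc |b z' - b z| = ‖b (z' - z)‖ := by rw [map_sub]; rfl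
      _ ≤ ‖b‖ * ‖z' - z‖ := b.le_opNorm _
      _ = ‖b‖ * ‖z - z'‖ := by rw [norm_sub_rev]
  have h3 : ‖z - z'‖ < ε / (2 * K) := by rwa [← dist_eq_norm]
  have h4 := hN k hk
  rw [Real.dist_eq] at h4 ⊢
  have htri : |fn k z - b z| ≤ |fn k z - fn k z'| + |fn k z' - b z'| + |b z' - b z| := by
    have e : fn k z - b z = (fn k z - fn k z') + (fn k z' - b z') + (b z' - b z) := by ring
    rw [e]
    exact (abs_add_le _ _).trans (add_le_add_left (abs_add_le _ _) _)
  have h5 : C * ‖z - z'‖ + ‖b‖ * ‖z - z'‖ ≤ K * ‖z - z'‖ := by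
    nlinarith [norm_nonneg (z - z')]
  have h6 : K * ‖z - z'‖ < ε / 2 := by
    calc K * ‖z - z'‖ < K * (ε / (2 * K)) := mul_lt_mul_of_pos_left h3 hK0
      _ = ε / 2 := by field_simp
  linarith [norm_nonneg (z - z')]

/-- abstract convergence theorem for Galerkin approximations: bounded
Galerkin solutions of `A x = b` on an increasing, densely exhausting family of closed
subspaces of a Hilbert space, for an operator with a condition-(S)-type property and
demicontinuity, have a strongly convergent subsequence whose limit solves `A x = b`. -/
theorem galerkin_subsequence_converges_to_solution
    {X : Type*} [NormedAddCommGroup X] [InnerProductSpace ℝ X] [CompleteSpace X]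
    (Xn : ℕ → Submodule ℝ X) (hmono : Monotone Xn)
    (hclosed : ∀ n, IsClosed (Xn n : Set X))
    (hdense : Dense (⋃ n, (Xn n : Set X)))
    (A : X → X →L[ℝ] ℝ) (b : X →L[ℝ] ℝ)
    (r : ℝ) (hr : 0 < r) (xn : ℕ → X)
    (hmem : ∀ n, xn n ∈ Xn n) (hbd : ∀ n, ‖xn n‖ ≤ r)
    (hgal : ∀ n, ∀ y ∈ Xn n, A (xn n) y = b y)
    (hAbd : ∃ C : ℝ, ∀ n, ‖A (xn n)‖ ≤ C)
    (hS : ∀ φ : ℕ → ℕ, StrictMono φ → ∀ y : X,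
      (∀ z : X, Tendsto (fun k => ⟪xn (φ k), z⟫) atTop (𝓝 ⟪y, z⟫)) →
      (∀ z : X, Tendsto (fun k => A (xn (φ k)) z) atTop (𝓝 (b z))) →
      Tendsto (fun k => A (xn (φ k)) (xn (φ k))) atTop (𝓝 (b y)) →
      Tendsto (fun k => ‖xn (φ k) - y‖) atTop (𝓝 0))
    (hdemi : ∀ (yk : ℕ → X) (y : X),
      Tendsto (fun k => ‖yk k - y‖) atTop (𝓝 0) →
      ∀ z : X, Tendsto (fun k => A (yk k) z) atTop (𝓝 (A y z))) :
    ∃ x : X, ‖x‖ ≤ r ∧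
      (∃ φ : ℕ → ℕ, StrictMono φ ∧
        Tendsto (fun k => ‖xn (φ k) - x‖) atTop (𝓝 0)) ∧
      A x = b := by
  obtain ⟨C, hC⟩ := hAbd
  -- the closed separable subspace generated by the Galerkin solutions
  set M : Submodule ℝ X := (Submodule.span ℝ (Set.range xn)).topologicalClosure with hM
  haveI : CompleteSpace M := (Submodule.isClosed_topologicalClosure _).completeSpace_coe
  have hxM : ∀ k, xn k ∈ M :=
    fun k => Submodule.le_topologicalClosure _ (Submodule.subset_span ⟨k, rfl⟩)
  have hsep : TopologicalSpace.IsSeparable (M : Set X) := by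
    rw [hM, Submodule.topologicalClosure_coe]
    exact ((Set.countable_range xn).isSeparable.span).closure
  obtain ⟨c, hc_count, hc_sub⟩ := hsep
  haveI : Countable c := hc_count.to_subtype
  -- extract a subsequence along which all pairings with elements of `c` converge
  have hFmem : ∀ k, (fun d : c => ⟪xn k, (d : X)⟫) ∈
      Set.pi Set.univ (fun d : c => Metric.closedBall (0 : ℝ) (r * ‖(d : X)‖)) := by
    intro k
    rw [Set.mem_univ_pi]
    intro d
    rw [Metric.mem_closedBall, Real.dist_eq, sub_zero]
    calc |⟪xn k, (d : X)⟫| ≤ ‖xn k‖ * ‖(d : X)‖ := abs_real_inner_le_norm _ _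
      _ ≤ r * ‖(d : X)‖ := mul_le_mul_of_nonneg_right (hbd k) (norm_nonneg _)
  have hScompact : IsCompact (Set.pi Set.univ
      (fun d : c => Metric.closedBall (0 : ℝ) (r * ‖(d : X)‖))) :=
    isCompact_univ_pi fun d => isCompact_closedBall _ _
  obtain ⟨L, -, φ, hφ, hL⟩ := hScompact.tendsto_subseq hFmem
  have hcoord : ∀ d : c, Tendsto (fun k => ⟪xn (φ k), (d : X)⟫) atTop (𝓝 (L d)) :=
    fun d => tendsto_pi_nhds.mp hL d
  -- pairing with any `z` only sees the projection of `z` to `M`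
  have hproj : ∀ j (z : X), ⟪xn j, z⟫ = ⟪xn j, (M.orthogonalProjectionOnto z : X)⟫ := by
    intro j z
    have horth : z - (M.orthogonalProjectionOnto z : X) ∈ Mᗮ := Submodule.sub_starProjection_mem_orthogonal (K := M) z
    have h0 : ⟪xn j, z - (M.orthogonalProjectionOnto z : X)⟫ = 0 :=
      (Submodule.mem_orthogonal M _).mp horth (xn j) (hxM j)
    have h1 : ⟪xn j, z⟫ - ⟪xn j, (M.orthogonalProjectionOnto z : X)⟫ = 0 := by
      rw [← inner_sub_right]; exact h0
    linarith
  -- hence the pairings with any `z` form a Cauchy sequence along the subsequence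
  have hcauchy : ∀ z : X, CauchySeq (fun k => ⟪xn (φ k), z⟫) := by
    intro z
    rw [Metric.cauchySeq_iff]
    intro ε hε
    have hwM : (M.orthogonalProjectionOnto z : X) ∈ (M : Set X) := (M.orthogonalProjectionOnto z).2
    obtain ⟨d, hdc, hdw⟩ := Metric.mem_closure_iff.mp (hc_sub hwM) (ε / 3 / (r + 1))
      (by positivity)
    obtain ⟨N, hN⟩ := Metric.cauchySeq_iff.mp (hcoord ⟨d, hdc⟩).cauchySeq (ε / 3)
      (by positivity)
    refine ⟨N, fun m hm n hn => ?_⟩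
    have key : ∀ j, |⟪xn (φ j), z⟫ - ⟪xn (φ j), d⟫| ≤ ε / 3 := by
      intro j
      rw [hproj (φ j) z, ← inner_sub_right]
      have hb1 : |⟪xn (φ j), (M.orthogonalProjectionOnto z : X) - d⟫| ≤
          r * (ε / 3 / (r + 1)) :=
        (abs_real_inner_le_norm _ _).trans
          (mul_le_mul (hbd _) (by rw [← dist_eq_norm]; exact hdw.le) (norm_nonneg _) hr.le)
      have hr1 : r * (ε / 3 / (r + 1)) ≤ ε / 3 := by
        rw [div_div, mul_div_assoc', div_le_div_iff₀ (by positivity) (by positivity)]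
        nlinarith
      exact hb1.trans hr1
    have h4 := hN m hm n hn
    rw [Real.dist_eq] at h4 ⊢
    have e : ⟪xn (φ m), z⟫ - ⟪xn (φ n), z⟫ =
        (⟪xn (φ m), z⟫ - ⟪xn (φ m), d⟫) + (⟪xn (φ m), d⟫ - ⟪xn (φ n), d⟫)
          + (⟪xn (φ n), d⟫ - ⟪xn (φ n), z⟫) := by ring
    have htri := (abs_add_le (⟪xn (φ m), z⟫ - ⟪xn (φ m), d⟫ + (⟪xn (φ m), d⟫ - ⟪xn (φ n), d⟫))
      (⟪xn (φ n), d⟫ - ⟪xn (φ n), z⟫)).trans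
      (add_le_add_left (abs_add_le _ _) _)
    rw [← e] at htri
    have k1 := key m
    have k2 := key n
    rw [abs_sub_comm] at k2
    linarith
  -- the weak limit `y`, via Riesz representation
  have hglim : ∀ z : X, ∃ l, Tendsto (fun k => ⟪xn (φ k), z⟫) atTop (𝓝 l) :=
    fun z => cauchySeq_tendsto_of_complete (hcauchy z)
  choose g hg using hglim
  have hgadd : ∀ z w, g (z + w) = g z + g w := by
    intro z w
    exact tendsto_nhds_unique (hg (z + w))
      (((hg z).add (hg w)).congr fun k => (inner_add_right _ _ _).symm)
  have hgsmul : ∀ (a : ℝ) z, g (a • z) = a * g z := by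
    intro a z
    exact tendsto_nhds_unique (hg (a • z))
      (((hg z).const_mul a).congr fun k => (real_inner_smul_right _ _ _).symm)
  have hgbound : ∀ z, ‖g z‖ ≤ r * ‖z‖ := by
    intro z
    refine le_of_tendsto' (hg z).norm fun k => ?_
    calc ‖⟪xn (φ k), z⟫‖ = |⟪xn (φ k), z⟫| := Real.norm_eq_abs _
      _ ≤ ‖xn (φ k)‖ * ‖z‖ := abs_real_inner_le_norm _ _
      _ ≤ r * ‖z‖ := mul_le_mul_of_nonneg_right (hbd _) (norm_nonneg _)
  set f₀ : X →ₗ[ℝ] ℝ :=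
    { toFun := g
      map_add' := hgadd
      map_smul' := hgsmul } with hf₀
  set f : X →L[ℝ] ℝ := f₀.mkContinuous r hgbound with hf
  set y : X := (InnerProductSpace.toDual ℝ X).symm f with hy
  have hyz : ∀ z, ⟪y, z⟫ = g z := fun z => InnerProductSpace.toDual_symm_apply
  have hweak : ∀ z, Tendsto (fun k => ⟪xn (φ k), z⟫) atTop (𝓝 ⟪y, z⟫) := by
    intro z; rw [hyz z]; exact hg z
  -- weak-* convergence of `A (xn (φ k))` to `b`
  have hAz : ∀ z, Tendsto (fun k => A (xn (φ k)) z) atTop (𝓝 (b z)) := by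
    refine dense_tendsto_aux (fun k => A (xn (φ k))) b C (fun k => hC _) _ hdense ?_
    intro z hz
    rw [Set.mem_iUnion] at hz
    obtain ⟨m, hzm⟩ := hz
    have hev : (fun k => A (xn (φ k)) z) =ᶠ[atTop] (fun _ => b z) := by
      filter_upwards [eventually_ge_atTop m] with k hk
      exact hgal (φ k) z (hmono (hk.trans hφ.le_apply) hzm)
    exact Filter.Tendsto.congr' hev.symm tendsto_const_nhds
  -- convergence of the "energy" pairing
  have henergy : Tendsto (fun k => A (xn (φ k)) (xn (φ k))) atTop (𝓝 (b y)) := by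
    have e1 : ∀ v : X, ⟪v, ((InnerProductSpace.toDual ℝ X).symm b : X)⟫ = b v := by
      intro v
      rw [real_inner_comm]
      exact InnerProductSpace.toDual_symm_apply
    have hw := hweak ((InnerProductSpace.toDual ℝ X).symm b)
    rw [e1 y] at hw
    have hby : Tendsto (fun k => b (xn (φ k))) atTop (𝓝 (b y)) :=
      hw.congr fun k => e1 _
    exact hby.congr fun k => (hgal (φ k) (xn (φ k)) (hmem (φ k))).symm
  -- strong convergence via the condition-(S)-type property
  have hstrong := hS φ hφ y hweak hAz henergy
  have hconv : Tendsto (fun k => xn (φ k)) atTop (𝓝 y) := by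
    rw [tendsto_iff_norm_sub_tendsto_zero]
    exact hstrong
  have hnorm : ‖y‖ ≤ r := le_of_tendsto' hconv.norm fun k => hbd _
  have hAy : A y = b := by
    ext z
    exact tendsto_nhds_unique (hdemi (fun k => xn (φ k)) y hstrong z) (hAz z)
  exact ⟨y, hnorm, ⟨φ, hφ, hstrong⟩, hAy⟩
end
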